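/- arXiv:2602.12729 — 3 statements merged into one kernel-verified Lean document; each statement's English description precedes it below -/
import Mathlib

section
/- Fix d ≥ 2, an integer k with 1 ≤ k ≤ d−1, and θ ∈ [0,1). Suppose nonnegative reals σ₁ ≥ σ₂ ≥ … ≥ σ_{k+1} satisfy ∑_{j=1}^{k+1} σⱼ² = 1 and σ_{k+1} ≤ (θ/k)·∑_{j=1}^{k} σⱼ (with σ_{k+1} = 0 when θ = 0). Then ∑_{j=1}^{k+1} σⱼ ≤ (k+θ)/√(k+θ²). -/
set_option maxHeartbeats 1000000 in
theorem stmt_3 (d k : ℕ) (hd : 2 ≤ d) (hk1 : 1 ≤ k) (hkd : k ≤ d - 1)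
    (θ : ℝ) (hθ : θ ∈ Set.Ico (0:ℝ) 1) (σ : ℕ → ℝ)
    (hnn : ∀ j ∈ Finset.Icc 1 (k+1), 0 ≤ σ j)
    (hmono : ∀ i ∈ Finset.Icc 1 (k+1), ∀ j ∈ Finset.Icc 1 (k+1), i ≤ j → σ j ≤ σ i)
    (hnorm : ∑ j ∈ Finset.Icc 1 (k+1), (σ j)^2 = 1)
    (hratio : σ (k+1) ≤ θ / k * ∑ j ∈ Finset.Icc 1 k, σ j)
    (hzero : θ = 0 → σ (k+1) = 0) :
    ∑ j ∈ Finset.Icc 1 (k+1), σ j ≤ (k + θ) / Real.sqrt (k + θ^2) := by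
  obtain ⟨hθ0, hθ1⟩ := hθ
  set t := σ (k+1) with htdef
  set S := ∑ j ∈ Finset.Icc 1 k, σ j with hSdef
  have hk1' : (1:ℝ) ≤ (k:ℝ) := by exact_mod_cast hk1
  have hkpos : (0:ℝ) < (k:ℝ) := by linarith
  have hsplit : ∑ j ∈ Finset.Icc 1 (k+1), σ j = S + t := by
    rw [Finset.sum_Icc_succ_top (by omega : 1 ≤ k+1)]
  have hsplit2 : ∑ j ∈ Finset.Icc 1 (k+1), (σ j)^2
      = (∑ j ∈ Finset.Icc 1 k, (σ j)^2) + t^2 := by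
    rw [Finset.sum_Icc_succ_top (by omega : 1 ≤ k+1)]
  set Q := ∑ j ∈ Finset.Icc 1 k, (σ j)^2 with hQdef
  have hQ1 : Q = 1 - t^2 := by rw [hsplit2] at hnorm; linarith
  have htnn : 0 ≤ t := hnn _ (by simp)
  clear_value t S Q
  have hSnn : 0 ≤ S := hSdef ▸ Finset.sum_nonneg fun j hj => by
    refine hnn j (Finset.mem_Icc.mpr ⟨(Finset.mem_Icc.mp hj).1, ?_⟩)
    have := (Finset.mem_Icc.mp hj).2; omega
  have hCS : S ^ 2 ≤ (k:ℝ) * Q := by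
    rw [hSdef, hQdef]
    have h := sq_sum_le_card_mul_sum_sq (s := Finset.Icc 1 k) (f := σ)
    rw [Nat.card_Icc] at h
    simpa using h
  have hApos : (0:ℝ) < (k:ℝ) + θ^2 := by positivity
  have hkt : (k:ℝ) * t ≤ θ * S := by
    have h := mul_le_mul_of_nonneg_left hratio (le_of_lt hkpos)
    calc (k:ℝ) * t ≤ (k:ℝ) * (θ / k * S) := h
      _ = θ * S := by field_simp
  have ht2 : t^2 * ((k:ℝ) + θ^2) ≤ θ^2 := by
    have h1 : ((k:ℝ) * t)^2 ≤ (θ * S)^2 := by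
      have := mul_self_le_mul_self (by positivity) hkt
      nlinarith [this]
    have h2 : (θ * S)^2 ≤ θ^2 * ((k:ℝ) * (1 - t^2)) := by
      rw [← hQ1]; nlinarith [mul_le_mul_of_nonneg_left hCS (sq_nonneg θ)]
    have hkt2 : (k:ℝ) * t^2 ≤ θ^2 * (1 - t^2) := by
      nlinarith [h1, h2, hkpos]
    nlinarith [hkt2]
  have hkey : (S + t)^2 * ((k:ℝ) + θ^2) ≤ ((k:ℝ) + θ)^2 := by
    rcases eq_or_lt_of_le hθ0 with hθz | hθpos
    · have ht0 : t = 0 := hzero hθz.symm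
      have hQ2 : Q = 1 := by rw [hQ1, ht0]; ring
      rw [hQ2] at hCS
      rw [ht0, ← hθz]
      nlinarith [hCS, hkpos]
    · have h3 : 2*S*t*θ ≤ θ^2*Q + (k:ℝ)*t^2 := by
        nlinarith [sq_nonneg (θ*S - (k:ℝ)*t),
          mul_le_mul_of_nonneg_left hCS (sq_nonneg θ), hkpos]
      have hA : (S+t)^2 * θ ≤ ((k:ℝ)+θ) * (θ*Q + t^2) := by nlinarith [hCS, h3, hθ0]
      have hB : (θ*Q + t^2) * ((k:ℝ)+θ^2) ≤ θ*((k:ℝ)+θ) := by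
        rw [hQ1]
        have := mul_le_mul_of_nonneg_left ht2 (by linarith : (0:ℝ) ≤ 1-θ)
        nlinarith [this]
      have h6 := mul_le_mul_of_nonneg_right hA (le_of_lt hApos)
      have h7 := mul_le_mul_of_nonneg_left hB (by positivity : (0:ℝ) ≤ (k:ℝ)+θ)
      nlinarith [h6, h7, hθpos]
  have hsq : Real.sqrt ((k:ℝ) + θ^2) ^ 2 = (k:ℝ) + θ^2 := Real.sq_sqrt (le_of_lt hApos)
  have hsqrtpos : 0 < Real.sqrt ((k:ℝ) + θ^2) := Real.sqrt_pos.mpr hApos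
  rw [hsplit, le_div_iff₀ hsqrtpos]
  nlinarith [hkey, hsq, mul_nonneg (add_nonneg hSnn htnn) (le_of_lt hsqrtpos),
    sq_nonneg ((S + t) * Real.sqrt ((k:ℝ) + θ^2) - ((k:ℝ) + θ))]
end

section
/- With the setup of the previous bound (∑ σⱼ² = 1, σ_{k+1} ≤ (θ/k)∑_{j=1}^k σⱼ, θ ∈ (0,1)), equality ∑_{j=1}^{k+1} σⱼ = (k+θ)/√(k+θ²) holds if and only if σ₁ = ⋯ = σ_k = 1/√(k+θ²) and σ_{k+1} = θ/√(k+θ²). -/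
theorem stmt_4 (k : ℕ) (hk1 : 1 ≤ k)
    (θ : ℝ) (hθ : θ ∈ Set.Ioo (0:ℝ) 1) (σ : ℕ → ℝ)
    (hnn : ∀ j ∈ Finset.Icc 1 (k+1), 0 ≤ σ j)
    (hmono : ∀ i ∈ Finset.Icc 1 (k+1), ∀ j ∈ Finset.Icc 1 (k+1), i ≤ j → σ j ≤ σ i)
    (hnorm : ∑ j ∈ Finset.Icc 1 (k+1), (σ j)^2 = 1)
    (hratio : σ (k+1) ≤ θ / k * ∑ j ∈ Finset.Icc 1 k, σ j) :
    (∑ j ∈ Finset.Icc 1 (k+1), σ j = (k + θ) / Real.sqrt (k + θ^2)) ↔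
      ((∀ j ∈ Finset.Icc 1 k, σ j = 1 / Real.sqrt (k + θ^2)) ∧
        σ (k+1) = θ / Real.sqrt (k + θ^2)) := by
  obtain ⟨hθ0, hθ1⟩ := hθ
  have hk0 : (0:ℝ) < k := by exact_mod_cast hk1
  have hkθ : (0:ℝ) < (k:ℝ) + θ^2 := by positivity
  set r : ℝ := Real.sqrt ((k:ℝ) + θ^2) with hr
  have hr0 : 0 < r := Real.sqrt_pos.mpr hkθ
  have hr2 : r^2 = (k:ℝ) + θ^2 := Real.sq_sqrt hkθ.le
  set S : ℝ := ∑ j ∈ Finset.Icc 1 k, σ j with hSdef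
  set t : ℝ := σ (k+1) with htdef
  have hsplit : ∀ f : ℕ → ℝ, ∑ j ∈ Finset.Icc 1 (k+1), f j
      = (∑ j ∈ Finset.Icc 1 k, f j) + f (k+1) := by
    intro f
    exact Finset.sum_Icc_succ_top (by omega) f
  have hSsum : ∑ j ∈ Finset.Icc 1 (k+1), σ j = S + t := hsplit σ
  have hQ : (∑ j ∈ Finset.Icc 1 k, (σ j)^2) + t^2 = 1 := by
    rw [← hsplit (fun j => (σ j)^2)]; exact hnorm
  have hmem : ∀ j ∈ Finset.Icc 1 k, j ∈ Finset.Icc 1 (k+1) := by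
    intro j hj
    simp only [Finset.mem_Icc] at hj ⊢; omega
  have htnn : 0 ≤ t := hnn (k+1) (by simp only [Finset.mem_Icc]; omega)
  have hSnn : 0 ≤ S := Finset.sum_nonneg fun j hj => hnn j (hmem j hj)
  have hcard : (Finset.Icc 1 k).card = k := by rw [Nat.card_Icc]; omega
  -- Cauchy-Schwarz: S + θ t ≤ r
  have hcs : S + θ * t ≤ r := by
    have h := Finset.sum_mul_sq_le_sq_mul_sq (Finset.Icc 1 (k+1))
      (fun j => if j = k+1 then θ else 1) σ
    have h1 : ∑ j ∈ Finset.Icc 1 (k+1), (if j = k+1 then θ else 1) * σ j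
        = S + θ * t := by
      rw [hsplit]
      simp only [if_pos rfl]
      congr 1
      apply Finset.sum_congr rfl
      intro j hj
      have : j ≠ k+1 := by simp only [Finset.mem_Icc] at hj; omega
      simp [this]
    have h2 : ∑ j ∈ Finset.Icc 1 (k+1), (if j = k+1 then θ else 1)^2
        = (k:ℝ) + θ^2 := by
      rw [hsplit]
      simp only [if_pos rfl]
      have : ∑ j ∈ Finset.Icc 1 k, (if j = k+1 then θ else 1)^2
          = ∑ j ∈ Finset.Icc 1 k, 1 := by
        apply Finset.sum_congr rfl
        intro j hj
        have : j ≠ k+1 := by simp only [Finset.mem_Icc] at hj; omega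
        simp [this]
      rw [this]; simp [hcard]
    rw [h1, h2, hnorm, mul_one] at h
    have hnn2 : 0 ≤ S + θ * t := by positivity
    nlinarith [sq_nonneg (S + θ*t - r)]
  -- t ≤ θ / r
  have htle : t ≤ θ / r := by
    have h1 : (k:ℝ) * t ≤ θ * S := by
      rw [div_mul_eq_mul_div, le_div_iff₀ hk0] at hratio
      linarith [hratio]
    have h2 : ((k:ℝ) + θ^2) * t ≤ θ * r := by nlinarith
    rw [le_div_iff₀ hr0]
    nlinarith [hr2, hr0, h2]
  have hmax : r + (1 - θ) * (θ / r) = ((k:ℝ) + θ) / r := by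
    field_simp
    nlinarith [hr2]
  constructor
  · intro heq
    rw [hSsum] at heq
    -- equality forces t = θ/r and S = k/r
    have hteq : t = θ / r := by
      by_contra hne
      have hlt : t < θ / r := lt_of_le_of_ne htle hne
      have : S + t < ((k:ℝ) + θ) / r := by
        have : S + t = (S + θ * t) + (1 - θ) * t := by ring
        rw [this, ← hmax]
        have h1 : (1 - θ) * t < (1 - θ) * (θ / r) := by
          apply mul_lt_mul_of_pos_left hlt; linarith
        linarith
      linarith [heq]
    have hSeq : S = (k:ℝ) / r := by
      have : S + t = ((k:ℝ) + θ) / r := heq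
      rw [hteq] at this
      field_simp at this ⊢
      linarith
    have hQeq : ∑ j ∈ Finset.Icc 1 k, (σ j)^2 = (k:ℝ) / r^2 := by
      have : t^2 = θ^2 / r^2 := by rw [hteq]; rw [div_pow]
      rw [this] at hQ
      rw [hr2] at hQ ⊢
      field_simp at hQ ⊢
      linarith
    have hvar : ∑ j ∈ Finset.Icc 1 k, (σ j - 1/r)^2 = 0 := by
      have expand : ∑ j ∈ Finset.Icc 1 k, (σ j - 1/r)^2
          = (∑ j ∈ Finset.Icc 1 k, (σ j)^2) - 2*(1/r)*S + (k:ℝ)*(1/r)^2 := by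
        have h : ∀ j ∈ Finset.Icc 1 k, (σ j - 1/r)^2
            = (σ j)^2 - 2*(1/r)*(σ j) + (1/r)^2 := by
          intro j _; ring
        rw [Finset.sum_congr rfl h, Finset.sum_add_distrib, Finset.sum_sub_distrib,
          Finset.sum_const, ← Finset.mul_sum, nsmul_eq_mul, hcard, ← hSdef]
      rw [expand, hQeq, hSeq]
      field_simp
      ring
    have hall : ∀ j ∈ Finset.Icc 1 k, (σ j - 1/r)^2 = 0 := by
      intro j hj
      have := (Finset.sum_eq_zero_iff_of_nonneg
        (fun j _ => sq_nonneg (σ j - 1/r))).mp hvar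
      exact this j hj
    constructor
    · intro j hj
      have := hall j hj
      have : σ j - 1/r = 0 := by
        exact pow_eq_zero_iff (by norm_num) |>.mp this
      linarith
    · exact hteq
  · rintro ⟨hall, ht⟩
    rw [hSsum]
    have : S = (k:ℝ) * (1/r) := by
      rw [hSdef]
      rw [Finset.sum_congr rfl hall, Finset.sum_const, hcard, nsmul_eq_mul]
    rw [this, ht]
    field_simp
end

section
/- Fix d ≥ 2, an integer k with 1 ≤ k ≤ d−1, and θ ∈ [0,1). Let ψ = ∑_{j=1}^{k+1} sⱼ eⱼ ⊗ eⱼ with s₁ ≥ … ≥ s_{k+1} ≥ 0, ∑ sⱼ² = 1, and s_{k+1} ≤ (θ/k)∑_{j=1}^k sⱼ. Let ω = (1/√d)∑_{i=1}^d eᵢ ⊗ eᵢ. Then |⟨ω, ψ⟩|² ≤ (k+θ)²/(d(k+θ²)), with equality attained for s₁ = ⋯ = s_k = 1/√(k+θ²) and s_{k+1} = θ/√(k+θ²). -/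
/-- The standard Hermitian inner product. -/
noncomputable def hermInner {ι : Type*} [Fintype ι] (a b : ι → ℂ) : ℂ :=
  ∑ i, star (a i) * b i

lemma herm_diag (d : ℕ) (c : ℝ) (g : ℕ → ℝ) :
    hermInner (fun p : Fin d × Fin d => if p.1 = p.2 then ((c : ℝ) : ℂ) else 0)
              (fun p : Fin d × Fin d => if p.1 = p.2 then ((g p.1.val : ℝ) : ℂ) else 0)
  = ((c * ∑ i ∈ Finset.range d, g i : ℝ) : ℂ) := by
  rw [hermInner, Fintype.sum_prod_type]
  have h1 : ∀ x : Fin d,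
      (∑ y : Fin d, star (if x = y then ((c : ℝ) : ℂ) else 0) *
        (if x = y then ((g x.val : ℝ) : ℂ) else 0)) = ((c * g x.val : ℝ) : ℂ) := by
    intro x
    rw [Fintype.sum_eq_single x]
    · simp
    · intro j hj
      simp [Ne.symm hj]
  simp only [h1]
  push_cast
  rw [← Finset.mul_sum, ← Fin.sum_univ_eq_sum_range fun i => ((g i : ℝ) : ℂ)]

lemma key (k : ℕ) (θ A b S : ℝ) (hk : 1 ≤ (k:ℝ)) (hθ0 : 0 ≤ θ) (hθ1 : θ < 1)
    (hA : 0 ≤ A) (hb : 0 ≤ b) (hC : A^2 ≤ k * S) (hS : S + b^2 = 1)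
    (hr : k * b ≤ θ * A) :
    ((k:ℝ) + θ^2) * (A + b)^2 ≤ ((k:ℝ)+θ)^2 := by
  set K := (k:ℝ)
  have h2 : 0 ≤ A*(2*K-θ*K+θ) - K*(K+2*θ-1)*b := by
    nlinarith [mul_le_mul_of_nonneg_left hr (show (0:ℝ) ≤ K+2*θ-1 by linarith),
      mul_nonneg (mul_nonneg hA (by linarith : (0:ℝ) ≤ 1-θ)) (by linarith : (0:ℝ) ≤ K+θ)]
  have hE : 0 ≤ (θ*A - K*b)*(A*(2*K-θ*K+θ) - K*(K+2*θ-1)*b) :=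
    mul_nonneg (by linarith) h2
  have hid : (K+θ)^2*(A^2 + K*b^2) - K*(K+θ^2)*(A+b)^2
      = (θ*A - K*b)*(A*(2*K-θ*K+θ) - K*(K+2*θ-1)*b) := by ring
  have h5 : K*(K+θ)^2*(S + b^2) = K*(K+θ)^2 := by rw [hS, mul_one]
  have h4 : (K+θ)^2*(A^2 + K*b^2) ≤ K*(K+θ)^2 := by
    nlinarith [mul_le_mul_of_nonneg_left hC (sq_nonneg (K+θ)), h5]
  have h3 : K*((K+θ^2)*(A+b)^2) ≤ K*((K+θ)^2) := by linarith
  exact le_of_mul_le_mul_left h3 (by linarith)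

theorem stmt_11 (d k : ℕ) (hd : 2 ≤ d) (hk1 : 1 ≤ k) (hkd : k ≤ d - 1)
    (θ : ℝ) (hθ : θ ∈ Set.Ico (0:ℝ) 1) (s : ℕ → ℝ)
    (hnn : ∀ j, 0 ≤ s j)
    (hmono : ∀ i j, i ≤ j → s j ≤ s i)
    (hsupp : ∀ j, k + 1 ≤ j → s j = 0)
    (hnorm : ∑ j ∈ Finset.range (k+1), (s j)^2 = 1)
    (hratio : s k ≤ θ / k * ∑ j ∈ Finset.range k, s j) :
    ‖(hermInner
        (fun p : Fin d × Fin d => if p.1 = p.2 then (((Real.sqrt d)⁻¹ : ℝ) : ℂ) else 0)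
        (fun p : Fin d × Fin d => if p.1 = p.2 then ((s p.1.val : ℝ) : ℂ) else 0))‖ ^ 2
      ≤ ((k:ℝ) + θ)^2 / (d * ((k:ℝ) + θ^2)) ∧
    ‖(hermInner
        (fun p : Fin d × Fin d => if p.1 = p.2 then (((Real.sqrt d)⁻¹ : ℝ) : ℂ) else 0)
        (fun p : Fin d × Fin d => if p.1 = p.2 then
            (((if p.1.val < k then (Real.sqrt ((k:ℝ) + θ^2))⁻¹
               else if p.1.val = k then θ / Real.sqrt ((k:ℝ) + θ^2) else 0) : ℝ) : ℂ)
          else 0))‖ ^ 2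
      = ((k:ℝ) + θ)^2 / (d * ((k:ℝ) + θ^2)) := by
  obtain ⟨hθ0, hθ1⟩ := hθ
  have hkd' : k + 1 ≤ d := by omega
  have hd0 : (0:ℝ) < d := by positivity
  have hK1 : (1:ℝ) ≤ (k:ℝ) := by exact_mod_cast hk1
  have hR : (0:ℝ) < (k:ℝ) + θ^2 := by positivity
  have hsqd : Real.sqrt d ≠ 0 := by positivity
  have hsub : Finset.range (k+1) ⊆ Finset.range d := Finset.range_subset_range.2 hkd'
  constructor
  · -- inequality part
    have h1 := herm_diag d (Real.sqrt d)⁻¹ s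
    rw [h1, Complex.norm_real, Real.norm_eq_abs, sq_abs]
    have hsum : ∑ i ∈ Finset.range d, s i = ∑ i ∈ Finset.range (k+1), s i := by
      refine (Finset.sum_subset hsub ?_).symm
      intro x _ hx
      exact hsupp x (by simpa using hx)
    rw [hsum, Finset.sum_range_succ]
    set A := ∑ j ∈ Finset.range k, s j with hAdef
    have hA : 0 ≤ A := Finset.sum_nonneg fun i _ => hnn i
    have hC : A^2 ≤ k * ∑ j ∈ Finset.range k, (s j)^2 := by
      simpa using sq_sum_le_card_mul_sum_sq (s := Finset.range k) (f := s)
    have hS : (∑ j ∈ Finset.range k, (s j)^2) + (s k)^2 = 1 := by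
      rw [← Finset.sum_range_succ]; exact hnorm
    have hr : (k:ℝ) * s k ≤ θ * A := by
      have hk0 : (0:ℝ) < k := by linarith
      have := mul_le_mul_of_nonneg_left hratio (le_of_lt hk0)
      calc (k:ℝ) * s k ≤ (k:ℝ) * (θ / k * A) := this
        _ = θ * A := by field_simp
    have hkey := key k θ A (s k) _ hK1 hθ0 hθ1 hA (hnn k) hC hS hr
    have hsd : ((Real.sqrt d)⁻¹)^2 = (d:ℝ)⁻¹ := by
      rw [inv_pow, Real.sq_sqrt (le_of_lt hd0)]
    rw [mul_pow, hsd, le_div_iff₀ (by positivity)]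
    have heq : (d:ℝ)⁻¹ * (A + s k)^2 * (↑d * ((k:ℝ) + θ^2)) = ((k:ℝ)+θ^2) * (A + s k)^2 := by
      field_simp
    rw [heq]
    exact hkey
  · -- equality part
    set R := (k:ℝ) + θ^2 with hRdef
    set g : ℕ → ℝ := fun i => if i < k then (Real.sqrt R)⁻¹
               else if i = k then θ / Real.sqrt R else 0 with hgdef
    have h1 := herm_diag d (Real.sqrt d)⁻¹ g
    rw [h1, Complex.norm_real, Real.norm_eq_abs, sq_abs]
    have hsum : ∑ i ∈ Finset.range d, g i = ((k:ℝ)+θ) / Real.sqrt R := by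
      rw [← Finset.sum_subset hsub (by
        intro x _ hx
        have : k + 1 ≤ x := by simpa using hx
        simp only [hgdef]
        rw [if_neg (by omega), if_neg (by omega)])]
      rw [Finset.sum_range_succ]
      have hgk : g k = θ / Real.sqrt R := by
        simp [hgdef]
      have hA : ∑ i ∈ Finset.range k, g i = (k:ℝ) * (Real.sqrt R)⁻¹ := by
        rw [Finset.sum_congr rfl (fun i hi => by
          simp only [hgdef]; rw [if_pos (Finset.mem_range.1 hi)])]
        simp [Finset.sum_const]
      rw [hA, hgk]
      field_simp
    rw [hsum]
    have hsR : Real.sqrt R ≠ 0 := by positivity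
    rw [mul_pow, div_pow, inv_pow, Real.sq_sqrt (le_of_lt hd0),
      Real.sq_sqrt (le_of_lt hR)]
    field_simp
end
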